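/- Let S, B, Y be nonempty finite types and let p be a probability mass function on S × B × Y such that the first two coordinates are conditionally independent given the third, i.e. P(S=s, B=b, Y=y) · P(Y=y) = P(S=s, Y=y) · P(B=b, Y=y) for all s, b, y. Then for all s ∈ S, b ∈ B, y ∈ Y with P(S=s, B=b) > 0, P(S=s) > 0, P(B=b) > 0 and P(Y=y) > 0, one has P(Y=y | S=s, B=b) = (P(Y=y | S=s) · P(Y=y | B=b) / P(Y=y)) · (P(S=s) · P(B=b) / P(S=s, B=b)). In particular, as a function of y, the full posterior P(Y=y | S=s, B=b) is proportional to P(Y=y | S=s) · P(Y=y | B=b) / P(Y=y). -/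

import Mathlib

/-- for a pmf `p` on `S × B × Y` whose first two coordinates are
conditionally independent given the third, the full posterior satisfies
`P(Y=y | S=s, B=b) = (P(Y=y|S=s)·P(Y=y|B=b)/P(Y=y)) · (P(S=s)·P(B=b)/P(S=s,B=b))`
whenever all conditioning events have positive probability; in particular, as a
function of `y`, `P(Y=y | S=s, B=b) ∝ P(Y=y|S=s)·P(Y=y|B=b)/P(Y=y)`. -/
theorem stmt_0 {S B Y : Type*} [Fintype S] [Fintype B] [Fintype Y]
    [Nonempty S] [Nonempty B] [Nonempty Y]
    (p : S × B × Y → ℝ) (hp : ∀ z, 0 ≤ p z) (hsum : ∑ z : S × B × Y, p z = 1)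
    -- conditional independence of the first two coordinates given the third:
    -- P(S=s, B=b, Y=y) · P(Y=y) = P(S=s, Y=y) · P(B=b, Y=y)
    (hci : ∀ (s : S) (b : B) (y : Y),
      p (s, b, y) * (∑ s' : S, ∑ b' : B, p (s', b', y)) =
        (∑ b' : B, p (s, b', y)) * (∑ s' : S, p (s', b, y))) :
    ∀ (s : S) (b : B) (y : Y),
      0 < (∑ y' : Y, p (s, b, y')) →                       -- P(S=s, B=b) > 0
      0 < (∑ b' : B, ∑ y' : Y, p (s, b', y')) →            -- P(S=s) > 0
      0 < (∑ s' : S, ∑ y' : Y, p (s', b, y')) →            -- P(B=b) > 0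
      0 < (∑ s' : S, ∑ b' : B, p (s', b', y)) →            -- P(Y=y) > 0
      p (s, b, y) / (∑ y' : Y, p (s, b, y')) =
        ((∑ b' : B, p (s, b', y)) / (∑ b' : B, ∑ y' : Y, p (s, b', y')) *
              ((∑ s' : S, p (s', b, y)) / (∑ s' : S, ∑ y' : Y, p (s', b, y'))) /
            (∑ s' : S, ∑ b' : B, p (s', b', y))) *
          ((∑ b' : B, ∑ y' : Y, p (s, b', y')) *
              (∑ s' : S, ∑ y' : Y, p (s', b, y')) /
            (∑ y' : Y, p (s, b, y'))) := by
  intro s b y hSB hS hB hY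
  have h := hci s b y
  field_simp
  linear_combination h
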